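/- Every element of Q is a nonnegative rational linear combination of elements of 𝒱 ∪ {v_D : D ∈ 𝒟'} (i.e., the cone generated by 𝒱 together with the v_D is all of Q) if and only if there exist strictly positive rational numbers (n_D)_{D ∈ 𝒟'} such that σ(Σ_{D ∈ 𝒟'} n_D v_D) > 0 for every σ ∈ Σ. -/

import Mathlib

/-- Let `Q` be a finite-dimensional ℚ-vector space, let `σ` be a basis of
the dual space `Q*`, let `𝒱 = {q : ∀ i, σ i q ≤ 0}` be the antidominant cone, and let
`(v d)` be a finite family of vectors in `Q`.  Then every element of `Q` is a nonnegative
rational combination of elements of `𝒱 ∪ {v d}` if and only if there exist strictly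
positive rationals `(n d)` with `σ i (∑ d, n d • v d) > 0` for every `i`. -/
theorem cone_generated_by_valuation_cone_and_colors_eq_top_iff
    {Q : Type*} [AddCommGroup Q] [Module ℚ Q] [FiniteDimensional ℚ Q]
    {ι : Type*} [Fintype ι]
    (σ : ι → Module.Dual ℚ Q)
    (hbasis : ∃ B : Module.Basis ι ℚ (Module.Dual ℚ Q), ∀ i, B i = σ i)
    {D : Type*} [Fintype D]
    (v : D → Q) :
    (∀ x : Q, ∃ (N : ℕ) (u : Fin N → Q) (c : Fin N → ℚ),
        (∀ k, u k ∈ ({q : Q | ∀ i, σ i q ≤ 0} ∪ Set.range v)) ∧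
        (∀ k, 0 ≤ c k) ∧ x = ∑ k, c k • u k) ↔
    (∃ n : D → ℚ, (∀ d, 0 < n d) ∧ ∀ i, 0 < σ i (∑ d, n d • v d)) := by
  classical
  constructor
  · intro H
    obtain ⟨B, hB⟩ := hbasis
    -- a vector `x` with `σ i x = 1` for all `i`
    set F : Module.Dual ℚ (Module.Dual ℚ Q) := ∑ j, B.coord j with hF
    set x : Q := (Module.evalEquiv ℚ Q).symm F with hx
    have hσx : ∀ i, σ i x = 1 := by
      intro i
      have h1 : σ i x = F (σ i) := Module.apply_evalEquiv_symm_apply ℚ Q (σ i) F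
      rw [h1, hF, ← hB i]
      simp only [LinearMap.coe_sum, Finset.sum_apply, Module.Basis.coord_apply, Module.Basis.repr_self,
        Finsupp.single_apply]
      simp
    obtain ⟨N, u, c, hu, hc, hsum⟩ := H x
    -- classify each `k`
    set g : Fin N → Option D := fun k => if h : ∃ d, v d = u k then some h.choose else none
      with hg
    have hg_some : ∀ k d, g k = some d → v d = u k := by
      intro k d h
      simp only [hg] at h
      by_cases h' : ∃ d, v d = u k
      · rw [dif_pos h'] at h
        obtain rfl : h'.choose = d := Option.some.inj h
        exact h'.choose_spec
      · rw [dif_neg h'] at h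
        cases h
    have hg_none : ∀ k, g k = none → ∀ i, σ i (u k) ≤ 0 := by
      intro k h i
      rcases hu k with h1 | h1
      · exact h1 i
      · obtain ⟨d, hd⟩ := h1
        simp only [hg] at h
        rw [dif_pos ⟨d, hd⟩] at h
        cases h
    set m : D → ℚ := fun d => ∑ k ∈ Finset.univ.filter (fun k => g k = some d), c k with hm
    have hm0 : ∀ d, 0 ≤ m d := fun d => Finset.sum_nonneg fun k _ => hc k
    -- the key inequality : 1 ≤ σ i (∑ d, m d • v d)
    have hkey : ∀ i, 1 ≤ σ i (∑ d, m d • v d) := by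
      intro i
      have h1 : σ i x = ∑ k, c k * σ i (u k) := by
        rw [hsum]; simp [map_sum]
      have h2 : ∑ k, c k * σ i (u k)
          = ∑ o : Option D, ∑ k ∈ Finset.univ.filter (fun k => g k = o), c k * σ i (u k) :=
        (Finset.sum_fiberwise Finset.univ g (fun k => c k * σ i (u k))).symm
      rw [Fintype.sum_option] at h2
      have hnone : ∑ k ∈ Finset.univ.filter (fun k => g k = none), c k * σ i (u k) ≤ 0 :=
        Finset.sum_nonpos fun k hk => by
          have hk' := (Finset.mem_filter.mp hk).2
          exact mul_nonpos_of_nonneg_of_nonpos (hc k) (hg_none k hk' i)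
      have hsomed : ∀ d, ∑ k ∈ Finset.univ.filter (fun k => g k = some d), c k * σ i (u k)
          = m d * σ i (v d) := by
        intro d
        rw [hm, Finset.sum_mul]
        refine Finset.sum_congr rfl fun k hk => ?_
        rw [hg_some k d (Finset.mem_filter.mp hk).2]
      have h3 : σ i (∑ d, m d • v d) = ∑ d, m d * σ i (v d) := by
        simp [map_sum]
      have h4 := hσx i
      rw [h1, h2] at h4
      rw [h3]
      calc (1 : ℚ) = _ + _ := h4.symm
        _ ≤ ∑ d, ∑ k ∈ Finset.univ.filter (fun k => g k = some d), c k * σ i (u k) := by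
            linarith
        _ = ∑ d, m d * σ i (v d) := Finset.sum_congr rfl fun d _ => hsomed d
    -- perturb to get strict positivity
    set M : ℚ := ∑ j, |σ j (∑ d, v d)| with hM
    have hM0 : 0 ≤ M := Finset.sum_nonneg fun j _ => abs_nonneg _
    set ε : ℚ := 1 / (M + 1) with hε
    have hε0 : 0 < ε := by positivity
    refine ⟨fun d => m d + ε, fun d => by dsimp only; linarith [hm0 d], fun i => ?_⟩
    have hsplit : (∑ d, (m d + ε) • v d) = (∑ d, m d • v d) + ε • ∑ d, v d := by
      rw [Finset.smul_sum, ← Finset.sum_add_distrib]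
      exact Finset.sum_congr rfl fun d _ => by rw [add_smul]
    have habs : |σ i (∑ d, v d)| ≤ M :=
      Finset.single_le_sum (fun j _ => abs_nonneg (σ j (∑ d, v d))) (Finset.mem_univ i)
    have hεM : ε * M < 1 := by
      rw [hε, div_mul_eq_mul_div, div_lt_one (by linarith)]
      linarith
    have h5 : -(ε * M) ≤ ε * σ i (∑ d, v d) := by
      have := neg_abs_le (σ i (∑ d, v d))
      nlinarith
    rw [hsplit, map_add, map_smul, smul_eq_mul]
    have := hkey i
    linarith
  · rintro ⟨n, hn, hσ⟩ x
    set w := ∑ d, n d • v d with hw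
    set t : ℚ := ∑ i, max 0 (σ i x / σ i w) with ht
    have ht0 : 0 ≤ t := Finset.sum_nonneg fun i _ => le_max_left _ _
    have hxw : ∀ i, σ i (x - t • w) ≤ 0 := by
      intro i
      have h0 : max 0 (σ i x / σ i w) ≤ t :=
        Finset.single_le_sum (f := fun i => max 0 (σ i x / σ i w))
          (fun j _ => le_max_left _ _) (Finset.mem_univ i)
      have h1 : σ i x / σ i w ≤ t := le_trans (le_max_right _ _) h0
      have h2 : σ i x ≤ t * σ i w := (div_le_iff₀ (hσ i)).mp h1
      rw [map_sub, map_smul, smul_eq_mul]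
      linarith
    refine ⟨Fintype.card D + 1,
      Fin.cons (x - t • w) (fun k => v ((Fintype.equivFin D).symm k)),
      Fin.cons 1 (fun k => t * n ((Fintype.equivFin D).symm k)), ?_, ?_, ?_⟩
    · intro k
      refine Fin.cases ?_ ?_ k
      · exact Or.inl hxw
      · intro k
        exact Or.inr ⟨_, rfl⟩
    · intro k
      refine Fin.cases ?_ ?_ k
      · norm_num
      · intro k
        exact mul_nonneg ht0 (hn _).le
    · rw [Fin.sum_univ_succ]
      simp only [Fin.cons_zero, Fin.cons_succ, one_smul]
      have h1 : ∑ k : Fin (Fintype.card D),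
          (t * n ((Fintype.equivFin D).symm k)) • v ((Fintype.equivFin D).symm k)
          = ∑ d, (t * n d) • v d :=
        Fintype.sum_equiv (Fintype.equivFin D).symm _ _ (fun k => rfl)
      have h2 : ∑ d, (t * n d) • v d = t • w := by
        rw [hw, Finset.smul_sum]
        exact Finset.sum_congr rfl fun d _ => (smul_smul t (n d) (v d)).symm
      rw [h1, h2]
      abel
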